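/- arXiv:2211.17192 — 8 statements merged into one kernel-verified Lean document; each statement's English description precedes it below -/
import Mathlib

section
/- Let α be a finite type and let p, q : α → ℝ be probability mass functions on α. Then the acceptance probability of speculative sampling satisfies β := ∑_{x : q(x) > 0} q(x) · min(1, p(x)/q(x)) = ∑_x min(p(x), q(x)) = 1 − D_LK(p, q). -/
theorem acceptance_rate_eq_one_sub_dlk {α : Type*} [Fintype α] (p q : α → ℝ)
    (hp : ∀ x, 0 ≤ p x) (hp1 : ∑ x, p x = 1)
    (hq : ∀ x, 0 ≤ q x) (hq1 : ∑ x, q x = 1) :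
    ∑ x ∈ Finset.univ.filter (fun x => 0 < q x), q x * min 1 (p x / q x)
      = ∑ x, min (p x) (q x) ∧
    ∑ x, min (p x) (q x) = 1 - ∑ x, |p x - (p x + q x) / 2| := by
  constructor
  · rw [← Finset.sum_filter_add_sum_filter_not Finset.univ (fun x => 0 < q x)
      (fun x => min (p x) (q x))]
    have h2 : ∑ x ∈ Finset.univ.filter (fun x => ¬ 0 < q x), min (p x) (q x) = 0 := by
      apply Finset.sum_eq_zero
      intro x hx
      simp only [Finset.mem_filter] at hx
      have : q x = 0 := le_antisymm (not_lt.mp hx.2) (hq x)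
      rw [this, min_eq_right (hp x)]
    rw [h2, add_zero]
    apply Finset.sum_congr rfl
    intro x hx
    simp only [Finset.mem_filter] at hx
    have hqx : q x ≠ 0 := ne_of_gt hx.2
    rw [mul_min_of_nonneg _ _ (hq x), mul_one, mul_div_cancel₀ _ hqx, min_comm]
  · have key : ∀ x, min (p x) (q x) = (p x + q x) / 2 - |p x - (p x + q x) / 2| := by
      intro x
      have : |p x - (p x + q x) / 2| = |p x - q x| / 2 := by
        have h2 : p x - (p x + q x) / 2 = (p x - q x) / 2 := by ring
        rw [h2, abs_div, abs_of_pos (show (0:ℝ) < 2 by norm_num)]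
      rw [this]
      rcases le_total (p x) (q x) with h | h
      · rw [min_eq_left h, abs_of_nonpos (by linarith)]; ring
      · rw [min_eq_right h, abs_of_nonneg (by linarith)]; ring
    simp only [key]
    rw [Finset.sum_sub_distrib]
    congr 1
    rw [← Finset.sum_div, Finset.sum_add_distrib, hp1, hq1]
    norm_num
end

section
/- Correctness of speculative sampling: let α be a finite type and let p, q : α → ℝ be probability mass functions on α with β := ∑_x min(p(x), q(x)) < 1, and let p'(x) := max(0, p(x) − q(x)) / (1 − β). Then for every x' in α, A(x') + R · p'(x') = p(x'), where A(x') = q(x') · min(1, p(x')/q(x')) if q(x') > 0 and A(x') = 0 otherwise, and R = ∑_{x : q(x) > 0} q(x) · (1 − min(1, p(x)/q(x))). That is, the distribution of the output of speculative sampling (sample x ~ q, accept with probability min(1, p(x)/q(x)), otherwise resample from p') is exactly p. -/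
theorem speculative_sampling_correct {α : Type*} [Fintype α] (p q : α → ℝ)
    (hp : ∀ x, 0 ≤ p x) (hp1 : ∑ x, p x = 1)
    (hq : ∀ x, 0 ≤ q x) (hq1 : ∑ x, q x = 1)
    (hβ : ∑ x, min (p x) (q x) < 1) :
    ∀ x' : α,
      (if 0 < q x' then q x' * min 1 (p x' / q x') else 0) +
      (∑ x ∈ Finset.univ.filter (fun x => 0 < q x), q x * (1 - min 1 (p x / q x))) *
        (max 0 (p x' - q x') / (1 - ∑ x, min (p x) (q x)))
      = p x' := by
  intro x'
  have hβne : (1 : ℝ) - ∑ x, min (p x) (q x) ≠ 0 := by linarith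
  have key : ∀ x, 0 < q x → q x * (1 - min 1 (p x / q x)) = q x - min (p x) (q x) := by
    intro x hx
    rw [mul_sub, mul_one, mul_min_of_nonneg _ _ hx.le, mul_one,
      mul_div_cancel₀ _ (ne_of_gt hx), min_comm]
  have hA : (if 0 < q x' then q x' * min 1 (p x' / q x') else 0) = min (p x') (q x') := by
    split_ifs with h
    · rw [mul_min_of_nonneg _ _ h.le, mul_one, mul_div_cancel₀ _ (ne_of_gt h), min_comm]
    · have hq0 : q x' = 0 := le_antisymm (not_lt.mp h) (hq x')
      rw [hq0, min_eq_right (hp x')]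
  have hR : (∑ x ∈ Finset.univ.filter (fun x => 0 < q x), q x * (1 - min 1 (p x / q x)))
      = 1 - ∑ x, min (p x) (q x) := by
    rw [Finset.sum_congr rfl (fun x hx => key x (Finset.mem_filter.mp hx).2)]
    rw [Finset.sum_subset (Finset.filter_subset _ _)]
    · rw [Finset.sum_sub_distrib, hq1]
    · intro x _ hx
      have hq0 : q x = 0 := le_antisymm
        (not_lt.mp (fun h => hx (Finset.mem_filter.mpr ⟨Finset.mem_univ x, h⟩))) (hq x)
      rw [hq0, min_eq_right (hp x)]
      ring
  rw [hA, hR, mul_div_assoc', mul_comm, mul_div_assoc, div_self hβne, mul_one]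
  rcases le_total (p x') (q x') with h | h
  · rw [min_eq_left h, max_eq_left (by linarith)]; ring
  · rw [min_eq_right h, max_eq_right (by linarith)]; ring
end

section
/- Let 0 ≤ a < 1 and let γ be a positive natural number. Let N be the capped geometric random variable on {1, …, γ+1} with P(N = k) = a^{k−1}(1 − a) for 1 ≤ k ≤ γ and P(N = γ+1) = a^γ. Then these probabilities are nonnegative and sum to 1, and the expectation satisfies E[N] = ∑_{k=1}^{γ} k · a^{k−1}(1 − a) + (γ+1) · a^γ = (1 − a^{γ+1}) / (1 − a). -/
lemma cge_sum (a : ℝ) (n : ℕ) :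
    (∑ k ∈ Finset.Icc 1 n, a ^ (k - 1) * (1 - a)) = 1 - a ^ n := by
  induction n with
  | zero => simp
  | succ n ih =>
      rw [Finset.sum_Icc_succ_top (by omega : 1 ≤ n + 1), ih]
      simp [pow_succ]
      ring

lemma cge_exp (a : ℝ) (ha1 : a < 1) (n : ℕ) :
    (∑ k ∈ Finset.Icc 1 n, (k : ℝ) * (a ^ (k - 1) * (1 - a))) + (n + 1 : ℝ) * a ^ n
      = (1 - a ^ (n + 1)) / (1 - a) := by
  have h1 : (1 : ℝ) - a ≠ 0 := by linarith
  induction n with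
  | zero => simp [div_self h1]
  | succ n ih =>
      rw [Finset.sum_Icc_succ_top (by omega : 1 ≤ n + 1)]
      have key : (∑ k ∈ Finset.Icc 1 n, (k : ℝ) * (a ^ (k - 1) * (1 - a)))
            + ((n+1:ℕ) : ℝ) * (a ^ (n + 1 - 1) * (1 - a)) + ((n+1:ℕ) + 1 : ℝ) * a ^ (n+1)
          = ((∑ k ∈ Finset.Icc 1 n, (k : ℝ) * (a ^ (k - 1) * (1 - a))) + (n + 1 : ℝ) * a ^ n)
            + a ^ (n+1) := by push_cast; simp [pow_succ]; ring
      rw [key, ih]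
      field_simp
      ring

theorem capped_geometric_expectation (a : ℝ) (ha0 : 0 ≤ a) (ha1 : a < 1)
    (γ : ℕ) (hγ : 0 < γ) :
    (∀ k ∈ Finset.Icc 1 γ, 0 ≤ a ^ (k - 1) * (1 - a)) ∧
    0 ≤ a ^ γ ∧
    (∑ k ∈ Finset.Icc 1 γ, a ^ (k - 1) * (1 - a)) + a ^ γ = 1 ∧
    (∑ k ∈ Finset.Icc 1 γ, (k : ℝ) * (a ^ (k - 1) * (1 - a))) + (γ + 1 : ℝ) * a ^ γ
      = (1 - a ^ (γ + 1)) / (1 - a) := by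
  refine ⟨fun k _ => mul_nonneg (pow_nonneg ha0 _) (by linarith), pow_nonneg ha0 _, ?_, cge_exp a ha1 γ⟩
  rw [cge_sum]; ring
end

section
/- Let 0 ≤ a < 1, let γ be a positive natural number, let c ≥ 0, and let T > 0. If each iteration of speculative decoding costs T·c·γ + T and produces on average (1 − a^{γ+1})/(1 − a) tokens, then the expected cost per token is (c·γ + 1)(1 − a)·T / (1 − a^{γ+1}), and hence the improvement factor over a baseline cost of T per token is T divided by this quantity, namely (1 − a^{γ+1}) / ((1 − a)(γ·c + 1)). -/
theorem speculative_walltime_improvement (a : ℝ) (ha0 : 0 ≤ a) (ha1 : a < 1)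
    (γ : ℕ) (hγ : 0 < γ) (c : ℝ) (hc : 0 ≤ c) (T : ℝ) (hT : 0 < T) :
    (T * c * γ + T) / ((1 - a ^ (γ + 1)) / (1 - a))
      = (c * γ + 1) * (1 - a) * T / (1 - a ^ (γ + 1)) ∧
    T / ((c * γ + 1) * (1 - a) * T / (1 - a ^ (γ + 1)))
      = (1 - a ^ (γ + 1)) / ((1 - a) * (γ * c + 1)) := by
  have hpow : a ^ (γ + 1) < 1 := pow_lt_one₀ ha0 ha1 (Nat.succ_ne_zero γ)
  have h1 : (1 : ℝ) - a ^ (γ + 1) ≠ 0 := by linarith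
  have h2 : (1 : ℝ) - a ≠ 0 := by linarith
  have h3 : c * γ + 1 ≠ 0 := by positivity
  constructor
  · field_simp
  · field_simp
end

section
/- Let 0 ≤ c < a < 1. Then the speculative decoding walltime improvement factor for γ = 1 satisfies (1 − a²) / ((1 − a)(c + 1)) = (1 + a)/(1 + c), and (1 + a)/(1 + c) > 1. In particular, if the expected acceptance rate a = α exceeds the cost coefficient c, there exists a positive integer γ for which speculative decoding yields a walltime improvement factor of at least (1 + α)/(1 + c) > 1. -/
theorem improvement_exists_of_alpha_gt_c (a c : ℝ) (hc0 : 0 ≤ c) (hca : c < a) (ha1 : a < 1) :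
    (1 - a ^ 2) / ((1 - a) * (c + 1)) = (1 + a) / (1 + c) ∧
    1 < (1 + a) / (1 + c) ∧
    ∃ γ : ℕ, 0 < γ ∧
      (1 + a) / (1 + c) ≤ (1 - a ^ (γ + 1)) / ((1 - a) * (γ * c + 1)) := by
  have ha : 1 - a ≠ 0 := by linarith
  have hc : (1 : ℝ) + c > 0 := by linarith
  have heq : (1 - a ^ 2) / ((1 - a) * (c + 1)) = (1 + a) / (1 + c) := by
    rw [div_eq_div_iff (by positivity) hc.ne']
    ring
  refine ⟨heq, ?_, 1, one_pos, ?_⟩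
  · rw [lt_div_iff₀ hc]; linarith
  · rw [← heq]; norm_num
end

section
/- Let 0 < a < 1 and c ≥ 0, and let γ* and γ be positive integers with γ* ≤ γ. If the speculative decoding walltime improvement factor satisfies (1 − a^{γ+1}) / ((1 − a)(γ·c + 1)) > 1, then also (1 − a^{γ*+1}) / ((1 − a)(γ*·c + 1)) > 1. That is, if speculative decoding yields an improvement for γ guesses, it yields an improvement for any smaller positive number of guesses. -/
lemma spec_key (a c : ℝ) (ha0 : 0 < a) (ha1 : a < 1) (hc : 0 ≤ c) (n : ℕ) :
    1 < (1 - a ^ (n + 1)) / ((1 - a) * (n * c + 1)) ↔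
      (n : ℝ) * c < ∑ i ∈ Finset.range n, a ^ (i + 1) := by
  have h1a : 0 < 1 - a := by linarith
  have hden : 0 < (1 - a) * (n * c + 1) ∨ True := Or.inr trivial
  have hgeom : (1 - a) * ∑ i ∈ Finset.range (n + 1), a ^ i = 1 - a ^ (n + 1) := by
    have := geom_sum_mul a (n + 1)
    nlinarith [this]
  have hsum : ∑ i ∈ Finset.range (n + 1), a ^ i
      = 1 + ∑ i ∈ Finset.range n, a ^ (i + 1) := by
    rw [Finset.sum_range_succ']
    simp [add_comm]
  constructor
  · intro h
    by_cases hd : 0 < (1 - a) * (n * c + 1)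
    · rw [lt_div_iff₀ hd] at h
      rw [← hgeom, hsum] at h
      have hnc : (n : ℝ) * c + 1 < 1 + ∑ i ∈ Finset.range n, a ^ (i + 1) := by
        nlinarith
      linarith
    · push_neg at hd
      have : (1 - a ^ (n + 1)) / ((1 - a) * (n * c + 1)) ≤ 0 := by
        apply div_nonpos_of_nonneg_of_nonpos
        · have : a ^ (n + 1) < 1 := pow_lt_one₀ ha0.le ha1 (Nat.succ_ne_zero n)
          linarith
        · exact hd
      linarith
  · intro h
    have hd : 0 < (1 - a) * (n * c + 1) := by
      have : (0:ℝ) ≤ (n:ℝ) * c := mul_nonneg (Nat.cast_nonneg n) hc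
      nlinarith
    rw [lt_div_iff₀ hd, ← hgeom, hsum]
    nlinarith

lemma spec_step (a c : ℝ) (ha0 : 0 < a) (ha1 : a < 1) (n : ℕ) (hn : 1 ≤ n)
    (h : ((n : ℝ) + 1) * c < ∑ i ∈ Finset.range (n + 1), a ^ (i + 1)) :
    (n : ℝ) * c < ∑ i ∈ Finset.range n, a ^ (i + 1) := by
  set T := ∑ i ∈ Finset.range (n + 1), a ^ (i + 1) with hT
  have hsplit : T = (∑ i ∈ Finset.range n, a ^ (i + 1)) + a ^ (n + 1) :=
    Finset.sum_range_succ _ n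
  have hbound : ((n : ℝ) + 1) * a ^ (n + 1) ≤ T := by
    have : ∀ i ∈ Finset.range (n + 1), a ^ (n + 1) ≤ a ^ (i + 1) := by
      intro i hi
      exact pow_le_pow_of_le_one ha0.le ha1.le
        (by simpa using Nat.succ_le_succ (Nat.lt_succ_iff.mp (Finset.mem_range.mp hi)))
    have := Finset.card_nsmul_le_sum (Finset.range (n + 1)) (fun i => a ^ (i + 1))
      (a ^ (n + 1)) this
    simpa [nsmul_eq_mul, add_comm, mul_comm] using this
  have hn' : (1:ℝ) ≤ (n:ℝ) := by exact_mod_cast hn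
  nlinarith [hsplit, hbound, h]

theorem improvement_monotone_down (a c : ℝ) (ha0 : 0 < a) (ha1 : a < 1) (hc : 0 ≤ c)
    (γstar γ : ℕ) (hγstar : 0 < γstar) (hγ : 0 < γ) (hle : γstar ≤ γ)
    (h : 1 < (1 - a ^ (γ + 1)) / ((1 - a) * (γ * c + 1))) :
    1 < (1 - a ^ (γstar + 1)) / ((1 - a) * (γstar * c + 1)) := by
  rw [spec_key a c ha0 ha1 hc] at h ⊢
  clear hγ
  induction γ, hle using Nat.le_induction with
  | base => exact h
  | succ n hn ih =>
    exact ih (spec_step a c ha0 ha1 n (le_trans hγstar hn) (by exact_mod_cast h))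
end

section
/- Let 0 ≤ a < 1, let γ be a positive natural number, and let ĉ ≥ 0. If one iteration of speculative decoding performs T̂·ĉ·γ + T̂·(γ + 1) arithmetic operations (for any T̂ > 0) and produces (1 − a^{γ+1})/(1 − a) tokens in expectation, then the expected factor of increase in the total number of arithmetic operations per token relative to a baseline of T̂ operations per token is (1 − a)(γ·ĉ + γ + 1) / (1 − a^{γ+1}). -/
theorem arithmetic_ops_increase_factor (a : ℝ) (ha0 : 0 ≤ a) (ha1 : a < 1)
    (γ : ℕ) (hγ : 0 < γ) (chat : ℝ) (hchat : 0 ≤ chat) (That : ℝ) (hThat : 0 < That) :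
    (That * chat * γ + That * (γ + 1)) / ((1 - a ^ (γ + 1)) / (1 - a)) / That
      = (1 - a) * (γ * chat + γ + 1) / (1 - a ^ (γ + 1)) := by
  have h1 : (1 : ℝ) - a ≠ 0 := by linarith
  have h2 : (1 : ℝ) - a ^ (γ + 1) ≠ 0 := by
    have : a ^ (γ + 1) < 1 := pow_lt_one₀ ha0 ha1 (Nat.succ_ne_zero γ)
    linarith
  field_simp
  ring
end

section
/- Rejection sampling is less efficient than speculative sampling: let α be a finite type and let p, q : α → ℝ be probability mass functions on α such that q(x) > 0 whenever p(x) > 0, and suppose p is not identically zero. Let M = max over {x : q(x) > 0} of p(x)/q(x). Then M > 0, the acceptance probability of one step of rejection sampling satisfies ∑_{x : q(x) > 0} q(x) · p(x)/(M · q(x)) = 1/M, and 1/M ≤ ∑_x min(p(x), q(x)). -/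
theorem rejection_sampling_less_efficient {α : Type*} [Fintype α] (p q : α → ℝ)
    (hp : ∀ x, 0 ≤ p x) (hp1 : ∑ x, p x = 1)
    (hq : ∀ x, 0 ≤ q x) (hq1 : ∑ x, q x = 1)
    (hpq : ∀ x, 0 < p x → 0 < q x) (hpne : ∃ x, 0 < p x)
    (M : ℝ) (hM : IsGreatest {r : ℝ | ∃ x, 0 < q x ∧ r = p x / q x} M) :
    0 < M ∧
    ∑ x ∈ Finset.univ.filter (fun x => 0 < q x), q x * (p x / (M * q x)) = 1 / M ∧
    1 / M ≤ ∑ x, min (p x) (q x) := by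
  obtain ⟨hmem, hub⟩ := hM
  obtain ⟨x0, hx0⟩ := hpne
  have hq0 : 0 < q x0 := hpq x0 hx0
  have hMpos : 0 < M := lt_of_lt_of_le (div_pos hx0 hq0) (hub ⟨x0, hq0, rfl⟩)
  have hkey : ∀ x, p x ≤ M * q x := by
    intro x
    rcases lt_or_ge 0 (q x) with h | h
    · have := hub ⟨x, h, rfl⟩
      exact (div_le_iff₀ h).mp this
    · have hqx : q x = 0 := le_antisymm h (hq x)
      have hpx : p x = 0 := by
        by_contra hne
        exact absurd hqx (ne_of_gt (hpq x (lt_of_le_of_ne (hp x) (Ne.symm hne))))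
      rw [hpx, hqx]; simp
  have hM1 : 1 ≤ M := by
    calc 1 = ∑ x, p x := hp1.symm
    _ ≤ ∑ x, M * q x := Finset.sum_le_sum fun x _ => hkey x
    _ = M := by rw [← Finset.mul_sum, hq1, mul_one]
  refine ⟨hMpos, ?_, ?_⟩
  · have hsum : ∑ x ∈ Finset.univ.filter (fun x => 0 < q x), q x * (p x / (M * q x))
        = ∑ x ∈ Finset.univ.filter (fun x => 0 < q x), p x / M := by
      apply Finset.sum_congr rfl
      intro x hx
      have hqx : q x ≠ 0 := ne_of_gt (Finset.mem_filter.mp hx).2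
      field_simp
    rw [hsum, ← Finset.sum_div]
    have : ∑ x ∈ Finset.univ.filter (fun x => 0 < q x), p x = ∑ x, p x := by
      apply Finset.sum_subset (Finset.filter_subset _ _)
      intro x _ hx
      simp only [Finset.mem_filter, Finset.mem_univ, true_and] at hx
      have hqx : q x = 0 := le_antisymm (not_lt.mp hx) (hq x)
      by_contra hne
      exact absurd hqx (ne_of_gt (hpq x (lt_of_le_of_ne (hp x) (Ne.symm hne))))
    rw [this, hp1]
  · calc 1 / M = ∑ x, p x / M := by rw [← Finset.sum_div, hp1]
    _ ≤ ∑ x, min (p x) (q x) := by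
        apply Finset.sum_le_sum
        intro x _
        apply le_min
        · exact div_le_self (hp x) hM1
        · rw [div_le_iff₀ hMpos]
          calc p x ≤ M * q x := hkey x
          _ = q x * M := mul_comm _ _
end
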